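/- Let μ be a probability measure on a measurable space X, let ℓ ≥ 2, and let α₁,...,α_ℓ be measurable subsets of X with 0 < μ(α_j) < 1 for every j. Suppose t ∈ ℝ and β : X^{ℓ−1} → [0,2π) is a measurable function such that e^{i t ∏_{j=1}^ℓ 1_{α_j}(x_j)} = e^{i β(x₁,...,x_{ℓ−1})} for μ^ℓ-almost every (x₁,...,x_ℓ). Then t ∈ 2πℤ; in particular, the function G(x₁,...,x_ℓ) = ∏_{j=1}^ℓ 1_{α_j}(x_j) satisfies the lattice condition: for every t ∈ [−π,π]\{0} there is no such β. -/

import Mathlib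

open MeasureTheory ProbabilityTheory Filter
open scoped ENNReal NNReal

section Key
variable {𝓧 : Type*} [MeasurableSpace 𝓧]

/-- Updating one coordinate with an independent sample preserves the product measure. -/
lemma update_measurePreserving (μ : Measure 𝓧) [IsProbabilityMeasure μ] (ℓ : ℕ) (i₀ : Fin ℓ) :
    MeasurePreserving (fun p : (Fin ℓ → 𝓧) × 𝓧 => Function.update p.1 i₀ p.2)
      ((Measure.pi fun _ : Fin ℓ => μ).prod μ) (Measure.pi fun _ : Fin ℓ => μ) := by
  have hF : Measurable (fun p : (Fin ℓ → 𝓧) × 𝓧 => Function.update p.1 i₀ p.2) := by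
    apply measurable_pi_lambda
    intro j
    by_cases hj : j = i₀
    · subst hj
      simpa using measurable_snd
    · simp only [Function.update_apply, hj, if_false]
      exact (measurable_pi_apply j).comp measurable_fst
  refine ⟨hF, ?_⟩
  symm
  apply Measure.pi_eq
  intro s hs
  rw [Measure.map_apply hF (MeasurableSet.univ_pi hs)]
  have hpre : (fun p : (Fin ℓ → 𝓧) × 𝓧 => Function.update p.1 i₀ p.2) ⁻¹' (Set.pi Set.univ s)
      = (Set.pi Set.univ (fun j => if j = i₀ then Set.univ else s j)) ×ˢ (s i₀) := by
    ext ⟨x, c⟩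
    simp only [Set.mem_preimage, Set.mem_pi, Set.mem_univ, true_implies, Set.mem_prod]
    constructor
    · intro h
      refine ⟨fun j => ?_, by simpa using h i₀⟩
      by_cases hj : j = i₀
      · simp [hj]
      · simpa [hj, Function.update_apply] using h j
    · rintro ⟨h1, h2⟩ j
      by_cases hj : j = i₀
      · subst hj; simpa using h2
      · have := h1 j
        simpa [hj, Function.update_apply] using this
  rw [hpre, Measure.prod_prod, Measure.pi_pi]
  have : (∏ j : Fin ℓ, μ (if j = i₀ then Set.univ else s j))
      = ∏ j ∈ Finset.univ.erase i₀, μ (s j) := by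
    rw [← Finset.prod_erase_mul _ _ (Finset.mem_univ i₀), if_pos rfl, measure_univ, mul_one]
    exact Finset.prod_congr rfl fun j hj => by rw [if_neg (Finset.ne_of_mem_erase hj)]
  rw [this, Finset.prod_erase_mul _ _ (Finset.mem_univ i₀)]

lemma key (μ : Measure 𝓧) [IsProbabilityMeasure μ]
    (ℓ : ℕ) (hℓ : 2 ≤ ℓ) (α : Fin ℓ → Set 𝓧) (hαmeas : ∀ j, MeasurableSet (α j))
    (hα0 : ∀ j, 0 < μ (α j)) (hα1 : ∀ j, μ (α j) < 1)
    (t : ℝ) (β : (Fin ℓ → 𝓧) → ℝ)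
    (hβdep : ∀ x y : Fin ℓ → 𝓧, (∀ i : Fin ℓ, (i : ℕ) + 1 < ℓ → x i = y i) → β x = β y)
    (heq : ∀ᵐ x ∂(Measure.pi fun _ : Fin ℓ => μ),
      Complex.exp (Complex.I *
          Complex.ofReal (t * ∏ j, (α j).indicator (fun _ => (1 : ℝ)) (x j)))
        = Complex.exp (Complex.I * Complex.ofReal (β x))) :
    ∃ z : ℤ, t = 2 * Real.pi * z := by
  set ν := (Measure.pi fun _ : Fin ℓ => μ) with hν
  set i₀ : Fin ℓ := ⟨ℓ - 1, by omega⟩ with hi₀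
  set P : (Fin ℓ → 𝓧) → Prop := fun x =>
      Complex.exp (Complex.I *
          Complex.ofReal (t * ∏ j, (α j).indicator (fun _ => (1 : ℝ)) (x j)))
        = Complex.exp (Complex.I * Complex.ofReal (β x)) with hP
  have hN0 : ν {x | ¬ P x} = 0 := by
    rw [← MeasureTheory.ae_iff]; exact heq
  set N := toMeasurable ν {x | ¬ P x} with hNdef
  have hNmeas : MeasurableSet N := measurableSet_toMeasurable _ _
  have hNnull : ν N = 0 := by rw [hNdef, measure_toMeasurable]; exact hN0
  have hsub : {x | ¬ P x} ⊆ N := subset_toMeasurable _ _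
  set F := fun p : (Fin ℓ → 𝓧) × 𝓧 => Function.update p.1 i₀ p.2 with hFdef
  have hMP := update_measurePreserving μ ℓ i₀
  set σ := ν.prod μ with hσ
  -- the bad set
  set bad : Set ((Fin ℓ → 𝓧) × 𝓧) := (Prod.fst ⁻¹' N) ∪ (F ⁻¹' N) with hbad
  have hbad0 : σ bad = 0 := by
    apply measure_union_null
    · have : σ (Prod.fst ⁻¹' N) = ν N * μ Set.univ := by
        have : Prod.fst ⁻¹' N = N ×ˢ (Set.univ : Set 𝓧) := by ext p; simp
        rw [this, Measure.prod_prod]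
      rw [this, hNnull, zero_mul]
    · exact hMP.quasiMeasurePreserving.preimage_null hNnull
  -- the good rectangle
  set A : Set (Fin ℓ → 𝓧) := Set.pi Set.univ α with hA
  have hApos : 0 < ν A := by
    rw [hA, hν, Measure.pi_pi]
    exact CanonicallyOrderedAdd.prod_pos.mpr fun j _ => hα0 j
  have hCpos : 0 < μ (α i₀)ᶜ := by
    have := measure_compl (hαmeas i₀) (measure_ne_top μ _)
    rw [this, measure_univ]
    exact tsub_pos_of_lt (hα1 i₀)
  have hrectpos : 0 < σ (A ×ˢ (α i₀)ᶜ) := by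
    rw [hσ, Measure.prod_prod]
    exact ENNReal.mul_pos hApos.ne' hCpos.ne'
  -- get a point in the rectangle outside the bad set
  have hne : ((A ×ˢ (α i₀)ᶜ) \ bad).Nonempty := by
    rw [Set.nonempty_iff_ne_empty]
    intro hemp
    have : σ (A ×ˢ (α i₀)ᶜ) ≤ σ bad := by
      apply measure_mono
      intro p hp
      by_contra hnb
      exact Set.eq_empty_iff_forall_notMem.mp hemp p ⟨hp, hnb⟩
    rw [hbad0] at this
    exact absurd (le_antisymm this zero_le) hrectpos.ne'
  obtain ⟨⟨x, c⟩, ⟨⟨hxA, hc⟩, hnb⟩⟩ := hne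
  have hPx : P x := by
    by_contra h
    exact hnb (Or.inl (hsub h))
  have hPy : P (Function.update x i₀ c) := by
    by_contra h
    exact hnb (Or.inr (hsub h))
  -- evaluate products
  have hprod1 : (∏ j, (α j).indicator (fun _ => (1 : ℝ)) (x j)) = 1 := by
    apply Finset.prod_eq_one
    intro j _
    rw [Set.indicator_of_mem (hxA j (Set.mem_univ j))]
  have hprod0 : (∏ j, (α j).indicator (fun _ => (1 : ℝ)) (Function.update x i₀ c j)) = 0 := by
    apply Finset.prod_eq_zero (Finset.mem_univ i₀)
    rw [Function.update_self]
    exact Set.indicator_of_notMem hc _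
  have hβeq : β x = β (Function.update x i₀ c) := by
    apply hβdep
    intro i hi
    rw [Function.update_apply, if_neg]
    intro h
    rw [h] at hi
    simp only [hi₀] at hi
    omega
  rw [hP] at hPx hPy
  rw [hprod1, mul_one] at hPx
  rw [hprod0, mul_zero, Complex.ofReal_zero, mul_zero, Complex.exp_zero, ← hβeq] at hPy
  rw [← hPy] at hPx
  -- now exp(I * t) = 1
  rw [Complex.exp_eq_one_iff] at hPx
  obtain ⟨n, hn⟩ := hPx
  refine ⟨n, ?_⟩
  have h2 : Complex.I * (t : ℂ) = Complex.I * ((n : ℂ) * (2 * Real.pi)) := by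
    rw [hn]; ring
  have h3 := mul_left_cancel₀ Complex.I_ne_zero h2
  have h4 : (t : ℂ) = ((2 * Real.pi * n : ℝ) : ℂ) := by push_cast; rw [h3]; ring
  exact_mod_cast h4

end Key

/-- The statement that for the given `t` there is no function `β` of the first `ℓ − 1`
variables, with values in `[0,2π)`, such that `e^{itG(x)} = e^{iβ(x₁,…,x_{ℓ−1})}` μ^ℓ-a.e. -/
def NoBeta {𝓧 : Type*} [MeasurableSpace 𝓧] (ℓ : ℕ) (G : (Fin ℓ → 𝓧) → ℝ)
    (μ : Measure 𝓧) (t : ℝ) : Prop :=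
  ¬ ∃ β : (Fin ℓ → 𝓧) → ℝ, Measurable β ∧ (∀ x, β x ∈ Set.Ico 0 (2 * Real.pi)) ∧
      (∀ x y : Fin ℓ → 𝓧, (∀ i : Fin ℓ, (i : ℕ) + 1 < ℓ → x i = y i) → β x = β y) ∧
      ∀ᵐ x ∂(Measure.pi fun _ : Fin ℓ => μ),
        Complex.exp (Complex.I * Complex.ofReal (t * G x))
          = Complex.exp (Complex.I * Complex.ofReal (β x))

/-- if `e^{it∏ 1_{α_j}(x_j)} = e^{iβ(x₁,…,x_{ℓ−1})}` μ^ℓ-a.e. for sets with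
`0 < μ(α_j) < 1`, then `t ∈ 2πℤ`; in particular `G = ∏ 1_{α_j}` satisfies the lattice
condition: for every `t ∈ [−π,π] \ {0}` there is no such `β`. -/
theorem statement6
    {𝓧 : Type*} [MeasurableSpace 𝓧] (μ : Measure 𝓧) [IsProbabilityMeasure μ]
    (ℓ : ℕ) (hℓ : 2 ≤ ℓ) (α : Fin ℓ → Set 𝓧) (hαmeas : ∀ j, MeasurableSet (α j))
    (hα0 : ∀ j, 0 < μ (α j)) (hα1 : ∀ j, μ (α j) < 1)
    (t : ℝ) (β : (Fin ℓ → 𝓧) → ℝ) (hβmeas : Measurable β)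
    (hβrange : ∀ x, β x ∈ Set.Ico 0 (2 * Real.pi))
    (hβdep : ∀ x y : Fin ℓ → 𝓧, (∀ i : Fin ℓ, (i : ℕ) + 1 < ℓ → x i = y i) → β x = β y)
    (heq : ∀ᵐ x ∂(Measure.pi fun _ : Fin ℓ => μ),
      Complex.exp (Complex.I *
          Complex.ofReal (t * ∏ j, (α j).indicator (fun _ => (1 : ℝ)) (x j)))
        = Complex.exp (Complex.I * Complex.ofReal (β x))) :
    (∃ z : ℤ, t = 2 * Real.pi * z) ∧
    (∀ t' : ℝ, t' ∈ Set.Icc (-Real.pi) Real.pi → t' ≠ 0 →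
      NoBeta ℓ (fun x => ∏ j, (α j).indicator (fun _ => (1 : ℝ)) (x j)) μ t') := by
  refine ⟨key μ ℓ hℓ α hαmeas hα0 hα1 t β hβdep heq, ?_⟩
  rintro t' ht' ht'0 ⟨β', _, _, hβ'dep, heq'⟩
  obtain ⟨z, hz⟩ := key μ ℓ hℓ α hαmeas hα0 hα1 t' β' hβ'dep heq'
  have hzne : z ≠ 0 := by
    rintro rfl
    simp at hz
    exact ht'0 hz
  have h1 : (1 : ℝ) ≤ |(z : ℝ)| := by
    rw [← Int.cast_abs]
    exact_mod_cast Int.one_le_abs hzne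
  have habs : |t'| ≤ Real.pi := abs_le.mpr ⟨ht'.1, ht'.2⟩
  have hpi := Real.pi_pos
  rw [hz, abs_mul, abs_of_pos (by positivity : (0:ℝ) < 2 * Real.pi)] at habs
  nlinarith
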